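/- For each 1 ≤ i ≤ ⌊n/2⌋, the i-th row of the matrix T_b contains a subset of at least n − gcd(n, i) entries whose corresponding random variables are independent and identically distributed (over the uniform choice of b). -/

import Mathlib

/-- The `n`-cyclic absolute value of `d ∈ ℤ_n`. -/
def cycAbs (n : ℕ) (d : ZMod n) : ℕ := min d.val (-d).val

/-- The entry `T_b(i,j) = |b(j) − b(j+i)|_n` of the matrix `T_b`. -/
def Tb (n : ℕ) (b : ZMod n → ZMod n) (i : ℕ) (j : ZMod n) : ℕ :=
  cycAbs n (b j - b (j + (i : ZMod n)))

/-- `m_s`, the number of residues `d ∈ ℤ_n` with `|d|_n = s`. -/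
def mval (n : ℕ) [NeZero n] (s : ℕ) : ℕ :=
  (Finset.univ.filter (fun d : ZMod n => cycAbs n d = s)).card


/-- existence of a step count reaching the low residues -/
lemma exAux (n i : ℕ) [NeZero n] (j : ZMod n) :
    ∃ t : ℕ, (j + ((t * i : ℕ) : ZMod n)).val < Nat.gcd n i := by
  have hn : 0 < n := Nat.pos_of_ne_zero (NeZero.ne n)
  have hg0 : 0 < Nat.gcd n i := Nat.gcd_pos_of_pos_left _ hn
  have hgn : Nat.gcd n i ≤ n := Nat.le_of_dvd hn (Nat.gcd_dvd_left n i)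
  obtain ⟨w, hw⟩ : ∃ w : ZMod n, ((Nat.gcd n i : ℕ) : ZMod n) = w * (i : ZMod n) := by
    refine ⟨((Nat.gcdB n i : ℤ) : ZMod n), ?_⟩
    have h := Nat.gcd_eq_gcd_ab n i
    calc ((Nat.gcd n i : ℕ) : ZMod n) = (((Nat.gcd n i : ℕ) : ℤ) : ZMod n) := by push_cast; ring
    _ = (((n : ℤ) * Nat.gcdA n i + (i : ℤ) * Nat.gcdB n i : ℤ) : ZMod n) := by rw [← h]
    _ = _ := by push_cast [ZMod.natCast_self]; ring
  set g := Nat.gcd n i with hg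
  set q := j.val / g with hq
  refine ⟨((-(q : ZMod n)) * w).val, ?_⟩
  have h1 : ((((-(q : ZMod n)) * w).val * i : ℕ) : ZMod n) = -((q : ZMod n) * (g : ZMod n)) := by
    push_cast
    rw [ZMod.natCast_val, ZMod.cast_id, hw]
    ring
  have hj : j = ((j.val % g + g * q : ℕ) : ZMod n) := by
    rw [Nat.mod_add_div, ZMod.natCast_val, ZMod.cast_id]
  have h2 : j + ((((-(q : ZMod n)) * w).val * i : ℕ) : ZMod n) = ((j.val % g : ℕ) : ZMod n) := by
    rw [h1]
    conv_lhs => rw [hj]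
    push_cast
    ring
  rw [h2, ZMod.val_cast_of_lt (lt_of_lt_of_le (Nat.mod_lt _ hg0) hgn)]
  exact Nat.mod_lt _ hg0

/-- distance to the low residues along steps of `i` -/
def distAux (n i : ℕ) [NeZero n] (j : ZMod n) : ℕ := Nat.find (exAux n i j)

lemma dist_lt (n i : ℕ) [NeZero n] (j : ZMod n) (h : Nat.gcd n i ≤ j.val) :
    distAux n i (j + (i : ZMod n)) < distAux n i j := by
  set d := distAux n i j with hd
  have hspec : (j + ((d * i : ℕ) : ZMod n)).val < Nat.gcd n i := Nat.find_spec (exAux n i j)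
  have hd0 : d ≠ 0 := by
    intro h0
    rw [h0] at hspec
    simp only [Nat.zero_mul, Nat.cast_zero, add_zero] at hspec
    omega
  have harith : (j + (i : ZMod n)) + (((d - 1) * i : ℕ) : ZMod n) = j + ((d * i : ℕ) : ZMod n) := by
    have : (d - 1) * i + i = d * i := by
      obtain ⟨m, hm⟩ := Nat.exists_eq_succ_of_ne_zero hd0
      rw [hm]
      simp [Nat.succ_sub_one]
      ring
    push_cast [← this]
    ring
  have hle : distAux n i (j + (i : ZMod n)) ≤ d - 1 :=
    Nat.find_le (by rw [harith]; exact hspec)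
  omega

/-- the difference-taking map on `b` -/
def psiAux (n i : ℕ) [NeZero n] (b : ZMod n → ZMod n) (j : ZMod n) : ZMod n :=
  if Nat.gcd n i ≤ j.val then b j - b (j + (i : ZMod n)) else b j

lemma psi_inj (n i : ℕ) [NeZero n] : Function.Injective (psiAux n i) := by
  intro b b' h
  have key : ∀ m, ∀ j : ZMod n, distAux n i j < m → b j = b' j := by
    intro m
    induction m with
    | zero => intro j hj; omega
    | succ m ih =>
      intro j hj
      have hcf := congrFun h j
      by_cases hcase : Nat.gcd n i ≤ j.val
      · have hnext : b (j + (i : ZMod n)) = b' (j + (i : ZMod n)) := by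
          have := dist_lt n i j hcase
          exact ih _ (by omega)
        simp only [psiAux, if_pos hcase] at hcf
        have : b j - b (j + (i : ZMod n)) = b' j - b' (j + (i : ZMod n)) := hcf
        rw [hnext] at this
        exact sub_left_injective this
      · simpa only [psiAux, if_neg hcase] using hcf
  funext j
  exact key (distAux n i j + 1) j (Nat.lt_succ_self _)

lemma psi_bij (n i : ℕ) [NeZero n] : Function.Bijective (psiAux n i) :=
  Finite.injective_iff_bijective.mp (psi_inj n i)

/-- For each `1 ≤ i ≤ ⌊n/2⌋`, row `i` of `T_b` contains at least `n − gcd(n,i)` entries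
which are i.i.d. random variables (their joint law factorizes into identical marginals
`m_s/n`). -/
theorem row_contains_iid_subset (n : ℕ) [NeZero n] (i : ℕ) (hi1 : 1 ≤ i) (hi2 : i ≤ n / 2) :
    ∃ J : Finset (ZMod n), n - Nat.gcd n i ≤ J.card ∧
      ∀ s : ZMod n → ℕ,
        ((Finset.univ.filter
            (fun b : ZMod n → ZMod n => ∀ j ∈ J, Tb n b i j = s j)).card : ℚ) / n ^ n
          = ∏ j ∈ J, (mval n (s j) : ℚ) / n := by
  classical
  have hn : 0 < n := Nat.pos_of_ne_zero (NeZero.ne n)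
  set g := Nat.gcd n i with hg
  have hg0 : 0 < g := Nat.gcd_pos_of_pos_left _ hn
  have hgn : g ≤ n := Nat.le_of_dvd hn (Nat.gcd_dvd_left n i)
  set J : Finset (ZMod n) := Finset.univ.filter (fun j : ZMod n => g ≤ j.val) with hJ
  -- cardinality of the complement set
  have hEcard : (Finset.univ.filter (fun j : ZMod n => ¬ g ≤ j.val)).card = g := by
    have : Finset.univ.filter (fun j : ZMod n => ¬ g ≤ j.val)
        = (Finset.range g).image (fun m : ℕ => (m : ZMod n)) := by
      ext x
      simp only [Finset.mem_filter, Finset.mem_univ, true_and, Finset.mem_image,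
        Finset.mem_range, not_le]
      constructor
      · intro hx
        exact ⟨x.val, hx, by simp [ZMod.natCast_val, ZMod.cast_id]⟩
      · rintro ⟨m, hm, rfl⟩
        rwa [ZMod.val_cast_of_lt (lt_of_lt_of_le hm hgn)]
    rw [this, Finset.card_image_of_injOn, Finset.card_range]
    intro a ha b hb hab
    simp only [Finset.coe_range, Set.mem_Iio] at ha hb
    have := congrArg ZMod.val hab
    rwa [ZMod.val_cast_of_lt (lt_of_lt_of_le ha hgn),
      ZMod.val_cast_of_lt (lt_of_lt_of_le hb hgn)] at this
  have hJcard : J.card = n - g := by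
    have h1 := Finset.card_filter_add_card_filter_not
      (s := (Finset.univ : Finset (ZMod n))) (p := fun j : ZMod n => g ≤ j.val)
    have h2 : (Finset.univ : Finset (ZMod n)).card = n := by
      simp [ZMod.card]
    rw [hJ]
    omega
  refine ⟨J, by rw [hJcard], ?_⟩
  intro s
  -- the target picture count
  set B : Finset (ZMod n → ZMod n) :=
    Finset.univ.filter (fun c : ZMod n → ZMod n => ∀ j ∈ J, cycAbs n (c j) = s j) with hB
  have hcard : (Finset.univ.filter
      (fun b : ZMod n → ZMod n => ∀ j ∈ J, Tb n b i j = s j)).card = B.card := by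
    refine Finset.card_bij (fun b _ => psiAux n i b) ?_ ?_ ?_
    · intro b hb
      simp only [Finset.mem_filter, Finset.mem_univ, true_and] at hb
      simp only [hB, Finset.mem_filter, Finset.mem_univ, true_and]
      intro j hj
      have hjg : g ≤ j.val := by simpa [hJ] using hj
      simp only [psiAux, if_pos (show Nat.gcd n i ≤ j.val from hjg)]
      exact hb j hj
    · intro a ha b hb hab
      exact psi_inj n i hab
    · intro c hc
      obtain ⟨b, rfl⟩ := (psi_bij n i).2 c
      refine ⟨b, ?_, rfl⟩
      simp only [hB, Finset.mem_filter, Finset.mem_univ, true_and] at hc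
      simp only [Finset.mem_filter, Finset.mem_univ, true_and]
      intro j hj
      have hjg : g ≤ j.val := by simpa [hJ] using hj
      have := hc j hj
      simpa only [psiAux, if_pos (show Nat.gcd n i ≤ j.val from hjg), Tb] using this
  -- B as a piFinset
  set t : ZMod n → Finset (ZMod n) := fun j =>
    if g ≤ j.val then Finset.univ.filter (fun d : ZMod n => cycAbs n d = s j)
    else Finset.univ with ht
  have hBpi : B = Fintype.piFinset t := by
    ext c
    simp only [hB, Finset.mem_filter, Finset.mem_univ, true_and, Fintype.mem_piFinset, ht, hJ]
    constructor
    · intro hcall j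
      by_cases hjg : g ≤ j.val
      · simp only [if_pos hjg, Finset.mem_filter, Finset.mem_univ, true_and]
        exact hcall j (by simp [hjg])
      · simp [if_neg hjg]
    · intro hcall j hj
      have hjg : g ≤ j.val := by simpa using hj
      have := hcall j
      simpa [if_pos hjg] using this
  have hBcard : (B.card : ℚ) = (∏ j ∈ J, (mval n (s j) : ℚ)) * (n : ℚ) ^ g := by
    rw [hBpi, Fintype.card_piFinset]
    push_cast
    rw [← Finset.prod_filter_mul_prod_filter_not Finset.univ (fun j : ZMod n => g ≤ j.val)
      (fun j => ((t j).card : ℚ))]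
    congr 1
    · refine Finset.prod_congr rfl ?_
      intro j hj
      have hjg : g ≤ j.val := by simpa [hJ] using hj
      simp [ht, if_pos hjg, mval]
    · have : ∀ j ∈ Finset.univ.filter (fun j : ZMod n => ¬ g ≤ j.val),
          ((t j).card : ℚ) = (n : ℚ) := by
        intro j hj
        have hjg : ¬ g ≤ j.val := by simpa using hj
        simp [ht, if_neg hjg, ZMod.card]
      rw [Finset.prod_congr rfl this, Finset.prod_const, hEcard]
  rw [hcard, hBcard, Finset.prod_div_distrib, Finset.prod_const, hJcard]
  have hnQ : (n : ℚ) ≠ 0 := Nat.cast_ne_zero.mpr (NeZero.ne n)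
  have hpow : (n : ℚ) ^ n = (n : ℚ) ^ (n - g) * (n : ℚ) ^ g := by
    rw [← pow_add, Nat.sub_add_cancel hgn]
  rw [hpow]
  field_simp
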